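/- Let r ≥ 2 be an integer, ξ ∈ {1,…,r}, s = r² + r + ξ, and t = r³ + r² + ξ(r+1). Then the s squares of side s in (ℤ/tℤ)² with base vertices (r·i, (r²+r+1)·i) for i ∈ {0, 1, …, s−1} cover the whole discrete torus (ℤ/tℤ)². -/
import Mathlib

open Set

noncomputable section

/-- A square of side `s` in `(ℤ/tℤ)²` with base vertex `x0`. -/
def square (t s : ℕ) (x0 : Fin 2 → ZMod t) : Set (Fin 2 → ZMod t) :=
  {x | ∀ i, ∃ j : ℕ, j < s ∧ x i = x0 i + (j : ZMod t)}

private lemma step_lemma (r c s t x y i₀ j₁ D : ℤ)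
    (hr0 : 0 ≤ r) (hc : 0 < c) (ht0 : 0 < t) (hcs : c ≤ s)
    (hj₁0 : 0 ≤ j₁) (hj₁s : j₁ < s) (hi₀ : 0 ≤ i₀)
    (hdiv : t ∣ r * i₀ + j₁ - x)
    (hD : i₀ + D < s) (hjD : r * D ≤ j₁)
    (hk : (y - c * i₀) % t < c * (D + 1)) :
    ∃ i j1 j2 : ℤ, 0 ≤ i ∧ i < s ∧ 0 ≤ j1 ∧ j1 < s ∧ 0 ≤ j2 ∧ j2 < s ∧
      (t ∣ r * i + j1 - x) ∧ (t ∣ c * i + j2 - y) := by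
  set f := (y - c * i₀) % t with hf
  have hf0 : 0 ≤ f := Int.emod_nonneg _ (ne_of_gt ht0)
  have hfd : t ∣ (y - c * i₀) - f := Int.dvd_self_sub_of_emod_eq rfl
  have hfc : c * (f / c) + f % c = f := Int.mul_ediv_add_emod f c
  have hk0 : 0 ≤ f / c := Int.ediv_nonneg hf0 (le_of_lt hc)
  have hj20 : 0 ≤ f % c := Int.emod_nonneg _ (ne_of_gt hc)
  have hj2c : f % c < c := Int.emod_lt_of_pos _ hc
  have hkD : f / c ≤ D := by
    by_contra h
    push_neg at h
    have h1 : D + 1 ≤ f / c := h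
    have h2 : c * (D + 1) ≤ c * (f / c) := by
      exact mul_le_mul_of_nonneg_left h1 (le_of_lt hc)
    linarith
  have hrk : r * (f / c) ≤ r * D := mul_le_mul_of_nonneg_left hkD hr0
  have hrk0 : 0 ≤ r * (f / c) := mul_nonneg hr0 hk0
  refine ⟨i₀ + f / c, j₁ - r * (f / c), f % c, by linarith, by linarith, by linarith,
    by linarith, hj20, lt_of_lt_of_le hj2c hcs, ?_, ?_⟩
  · have h : r * (i₀ + f / c) + (j₁ - r * (f / c)) - x = r * i₀ + j₁ - x := by ring
    rw [h]; exact hdiv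
  · have h : c * (i₀ + f / c) + f % c - y = -((y - c * i₀) - f) := by linarith
    rw [h]; exact dvd_neg.mpr hfd

set_option maxHeartbeats 1000000 in
private lemma key_lemma (r ξ : ℤ) (hr : 2 ≤ r) (hξ1 : 1 ≤ ξ) (hξ2 : ξ ≤ r)
    (s t : ℤ) (hs : s = r ^ 2 + r + ξ) (ht : t = r ^ 3 + r ^ 2 + ξ * (r + 1))
    (x y : ℤ) (hx0 : 0 ≤ x) (hxt : x < t) (hy0 : 0 ≤ y) (hyt : y < t) :
    ∃ i j1 j2 : ℤ, 0 ≤ i ∧ i < s ∧ 0 ≤ j1 ∧ j1 < s ∧ 0 ≤ j2 ∧ j2 < s ∧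
      (t ∣ r * i + j1 - x) ∧ (t ∣ (r ^ 2 + r + 1) * i + j2 - y) := by
  have hr0 : (0:ℤ) < r := by linarith
  obtain ⟨c, hc⟩ : ∃ c : ℤ, c = r ^ 2 + r + 1 := ⟨_, rfl⟩
  rw [← hc]
  have hc0 : 0 < c := by rw [hc]; positivity
  have hrr : r * r = r ^ 2 := by ring
  have hr2 : (0:ℤ) ≤ r ^ 2 := by positivity
  have hxir : r ≤ r * ξ := by nlinarith
  have hxir2 : ξ * r ≤ r ^ 2 := by nlinarith
  have ht0 : 0 < t := by rw [ht]; nlinarith [pow_pos hr0 3]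
  have hcs : c ≤ s := by rw [hs, hc]; linarith
  have hrs : r * s = t - ξ := by rw [hs, ht]; ring
  have hsv : s = r ^ 2 + r + ξ := hs
  have htc : t < c * (r + 1) := by rw [ht, hc]; nlinarith
  have hcrt : c * r < t := by rw [ht, hc]; nlinarith
  have hA2v : r * (s - 1 - r) = t - ξ - r - r ^ 2 := by
    have : r * (s - 1 - r) = r * s - r - r * r := by ring
    rw [this, hrs, hrr]
  rcases le_or_gt (r ^ 2) x with hA | hB
  · -- Case A : x ≥ r²
    have hemod : (y - c * ((x - r ^ 2) / r)) % t < t := Int.emod_lt_of_pos _ ht0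
    rcases le_or_gt x (t - ξ - r) with hA1 | hA2
    · -- A1
      obtain ⟨i₀, ρ, hid, hρ0, hρr, hi₀0⟩ :
          ∃ i₀ ρ : ℤ, r * i₀ + ρ = x - r ^ 2 ∧ 0 ≤ ρ ∧ ρ < r ∧ 0 ≤ i₀ :=
        ⟨(x - r ^ 2) / r, (x - r ^ 2) % r, Int.mul_ediv_add_emod _ _,
          Int.emod_nonneg _ (ne_of_gt hr0), Int.emod_lt_of_pos _ hr0,
          Int.ediv_nonneg (by linarith) (le_of_lt hr0)⟩
      have hi₀le : i₀ ≤ s - 1 - r := by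
        have h1 : r * i₀ ≤ r * (s - 1 - r) := by rw [hA2v]; linarith
        exact le_of_mul_le_mul_left h1 hr0
      refine step_lemma r c s t x y i₀ (r ^ 2 + ρ) r (le_of_lt hr0) hc0 ht0 hcs
        (by positivity) (by rw [hs]; linarith) hi₀0 ?_ (by linarith) (by nlinarith) ?_
      · have h : r * i₀ + (r ^ 2 + ρ) - x = 0 := by linarith
        rw [h]; exact dvd_zero t
      · calc (y - c * i₀) % t < t := Int.emod_lt_of_pos _ ht0
          _ < c * (r + 1) := htc
    · -- A2
      refine step_lemma r c s t x y (s - 1 - r) (x - r * (s - 1 - r)) r (le_of_lt hr0)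
        hc0 ht0 hcs ?_ ?_ (by rw [hsv]; nlinarith) ?_ (by linarith) ?_ ?_
      · rw [hA2v]; linarith
      · rw [hA2v]; linarith
      · have h : r * (s - 1 - r) + (x - r * (s - 1 - r)) - x = 0 := by ring
        rw [h]; exact dvd_zero t
      · rw [hA2v, ← hrr]; linarith
      · calc (y - c * (s - 1 - r)) % t < t := Int.emod_lt_of_pos _ ht0
          _ < c * (r + 1) := htc
  · -- Case B : x < r²
    obtain ⟨q, ρ, hid, hρ0, hρr, hq0⟩ :
        ∃ q ρ : ℤ, r * q + ρ = x ∧ 0 ≤ ρ ∧ ρ < r ∧ 0 ≤ q :=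
      ⟨x / r, x % r, Int.mul_ediv_add_emod _ _, Int.emod_nonneg _ (ne_of_gt hr0),
        Int.emod_lt_of_pos _ hr0, Int.ediv_nonneg hx0 (le_of_lt hr0)⟩
    have hqr : q < r := by
      have h1 : r * q < r * r := by rw [hrr]; linarith
      exact lt_of_mul_lt_mul_left h1 (le_of_lt hr0)
    rcases lt_or_ge y (c * (q + 1)) with hB1 | hB2
    · -- B1
      refine step_lemma r c s t x y 0 x q (le_of_lt hr0) hc0 ht0 hcs hx0
        (by rw [hsv]; linarith) le_rfl ?_ (by rw [hsv]; linarith) (by linarith) ?_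
      · have h : r * 0 + x - x = 0 := by ring
        rw [h]; exact dvd_zero t
      · have h : y - c * 0 = y := by ring
        rw [h, Int.emod_eq_of_lt hy0 hyt]; exact hB1
    · -- B2
      have hts : s < t := by rw [hs, ht]; nlinarith [pow_pos hr0 3, hxir]
      obtain ⟨i₀, ρ₂, hid2, hρ₂0, hρ₂r, hi₀0⟩ :
          ∃ i₀ ρ₂ : ℤ, r * i₀ + ρ₂ = x + t - s + r ∧ 0 ≤ ρ₂ ∧ ρ₂ < r ∧ 0 ≤ i₀ :=
        ⟨(x + t - s + r) / r, (x + t - s + r) % r, Int.mul_ediv_add_emod _ _,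
          Int.emod_nonneg _ (ne_of_gt hr0), Int.emod_lt_of_pos _ hr0,
          Int.ediv_nonneg (by linarith) (le_of_lt hr0)⟩
      have hi₀s : i₀ ≤ s - 1 := by
        have h1 : r * i₀ < r * s := by rw [hrs]; linarith [hsv]
        have := lt_of_mul_lt_mul_left h1 (le_of_lt hr0)
        linarith
      obtain ⟨D, hD⟩ : ∃ D : ℤ, D = s - 1 - i₀ := ⟨_, rfl⟩
      have hD0 : 0 ≤ D := by linarith
      have hrD : r * D = r * s - r - r * i₀ := by rw [hD]; ring
      have hrDval : r * D = r ^ 2 - r - x + ρ₂ := by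
        rw [hrD, hrs]; linarith [hsv, hid2]
      have hDr : D ≤ r - 1 := by
        have h1 : r * D < r * r := by rw [hrr]; linarith
        have := lt_of_mul_lt_mul_left h1 (le_of_lt hr0)
        linarith
      have hDq : r - 1 - q ≤ D := by
        have h1 : r * (r - 2 - q) < r * D := by
          have h2 : r * (r - 2 - q) = r * r - 2 * r - r * q := by ring
          rw [h2, hrr]; linarith
        have := lt_of_mul_lt_mul_left h1 (le_of_lt hr0)
        linarith
      -- key inequality on the emod
      have hw : c * s = (r + 1) * t + r * (r + 1 - ξ) := by rw [hc, hs, ht]; ring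
      have hw0 : 0 ≤ r * (r + 1 - ξ) := mul_nonneg (le_of_lt hr0) (by linarith)
      have hwc : r * (r + 1 - ξ) < c := by
        have h2 : r * (r + 1 - ξ) = r * r + r - ξ * r := by ring
        rw [hc, h2, hrr]; linarith
      have hcD1 : c * (D + 1) ≤ c * r := mul_le_mul_of_nonneg_left (by linarith)
        (le_of_lt hc0)
      have hcD1' : c ≤ c * (D + 1) := by
        have h := mul_le_mul_of_nonneg_left (show (1:ℤ) ≤ D + 1 by linarith)
          (le_of_lt hc0)
        linarith [h]
      have hkey : (y - c * i₀) % t < c * (D + 1) := by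
        have hyc : y - c * i₀ = (y - r * (r + 1 - ξ) + c * (D + 1)) - (r + 1) * t := by
          have : c * i₀ = c * s - c * (D + 1) := by rw [hD]; ring
          rw [this, hw]; ring
        rcases lt_or_ge y (r * (r + 1 - ξ)) with hy1 | hy2
        · -- y < w₀ : representative is V = y - w₀ + c(D+1)
          have hV0 : 0 ≤ y - r * (r + 1 - ξ) + c * (D + 1) := by linarith
          have hVt : y - r * (r + 1 - ξ) + c * (D + 1) < t := by linarith
          have heq : y - c * i₀ = (y - r * (r + 1 - ξ) + c * (D + 1)) + t * (-(r + 1)) := by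
            rw [hyc]; ring
          rw [heq, Int.add_mul_emod_self_left, Int.emod_eq_of_lt hV0 hVt]
          linarith
        · -- y ≥ w₀ : representative is V' = y - w₀ + c(D+1) - t
          have hcrq : c * (r - q) ≤ c * (D + 1) :=
            mul_le_mul_of_nonneg_left (by linarith) (le_of_lt hc0)
          have hcr1 : c * (q + 1) + c * (r - q) = c * (r + 1) := by ring
          have hct : t + r * (r + 1 - ξ) ≤ c * (r + 1) := by
            have e1 : c * (r + 1) = r ^ 3 + 2 * r ^ 2 + 2 * r + 1 := by rw [hc]; ring
            have e2 : t + r * (r + 1 - ξ) = r ^ 3 + 2 * r ^ 2 + r + ξ := by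
              rw [ht]; ring
            rw [e1, e2]; linarith
          have hV0 : 0 ≤ y - r * (r + 1 - ξ) + c * (D + 1) - t := by linarith
          have hVt : y - r * (r + 1 - ξ) + c * (D + 1) - t < t := by linarith
          have heq : y - c * i₀ =
              (y - r * (r + 1 - ξ) + c * (D + 1) - t) + t * (-r) := by
            rw [hyc]; ring
          rw [heq, Int.add_mul_emod_self_left, Int.emod_eq_of_lt hV0 hVt]
          linarith
      have hj1a : (0:ℤ) ≤ s - r + ρ₂ := by
        rw [hsv]; linarith
      have hj1b : s - r + ρ₂ < s := by linarith
      have hdivB : t ∣ r * i₀ + (s - r + ρ₂) - x := by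
        have h : r * i₀ + (s - r + ρ₂) - x = t := by linarith
        rw [h]
      have hjDB : r * D ≤ s - r + ρ₂ := by
        rw [hsv]; linarith [hrDval]
      have hDs : i₀ + D < s := by linarith
      exact step_lemma r c s t x y i₀ (s - r + ρ₂) D (le_of_lt hr0) hc0 ht0 hcs
        hj1a hj1b hi₀0 hdivB hDs hjDB hkey

/-- Claim 4: the `s` squares of side `s` with base vertices `(r·i, (r²+r+1)·i)`,
`i ∈ {0, 1, …, s-1}`, cover `(ℤ/tℤ)²`. -/
theorem squares_cover_two_torus (r ξ : ℕ) (hr : 2 ≤ r) (hξ1 : 1 ≤ ξ) (hξ2 : ξ ≤ r)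
    (s t : ℕ) (hs : s = r^2 + r + ξ) (ht : t = r^3 + r^2 + ξ * (r + 1)) :
    (⋃ i : Fin s,
      square t s ![((r * (i : ℕ) : ℕ) : ZMod t), (((r^2 + r + 1) * (i : ℕ) : ℕ) : ZMod t)])
      = Set.univ := by
  have hr0 : 0 < r := by omega
  have ht0 : 0 < t := by rw [ht]; positivity
  haveI : NeZero t := ⟨by omega⟩
  ext p
  simp only [Set.mem_iUnion, Set.mem_univ, iff_true, square, Set.mem_setOf_eq]
  set x := (p 0).val with hxdef
  set y := (p 1).val with hydef
  have hxt : x < t := ZMod.val_lt (p 0)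
  have hyt : y < t := ZMod.val_lt (p 1)
  obtain ⟨i, j1, j2, hi0, his, hj10, hj1s, hj20, hj2s, hd1, hd2⟩ :=
    key_lemma (r : ℤ) (ξ : ℤ) (by exact_mod_cast hr) (by exact_mod_cast hξ1)
      (by exact_mod_cast hξ2) (s : ℤ) (t : ℤ) (by rw [hs]; push_cast; ring)
      (by rw [ht]; push_cast; ring) (x : ℤ) (y : ℤ) (by positivity)
      (by exact_mod_cast hxt) (by positivity) (by exact_mod_cast hyt)
  have hiN : ((i.toNat : ℤ)) = i := Int.toNat_of_nonneg hi0
  have hj1N : ((j1.toNat : ℤ)) = j1 := Int.toNat_of_nonneg hj10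
  have hj2N : ((j2.toNat : ℤ)) = j2 := Int.toNat_of_nonneg hj20
  have hiNs : i.toNat < s := by
    have : ((i.toNat : ℤ)) < (s : ℤ) := by rw [hiN]; exact his
    exact_mod_cast this
  have hj1Ns : j1.toNat < s := by
    have : ((j1.toNat : ℤ)) < (s : ℤ) := by rw [hj1N]; exact hj1s
    exact_mod_cast this
  have hj2Ns : j2.toNat < s := by
    have : ((j2.toNat : ℤ)) < (s : ℤ) := by rw [hj2N]; exact hj2s
    exact_mod_cast this
  refine ⟨⟨i.toNat, hiNs⟩, ?_⟩
  have hp0 : p 0 = ((x : ℕ) : ZMod t) := by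
    rw [hxdef, ZMod.natCast_val, ZMod.cast_id]
  have hp1 : p 1 = ((y : ℕ) : ZMod t) := by
    rw [hydef, ZMod.natCast_val, ZMod.cast_id]
  have he1 : p 0 = ((r * i.toNat : ℕ) : ZMod t) + ((j1.toNat : ℕ) : ZMod t) := by
    rw [hp0]
    have h1 : ((x : ℤ) : ZMod t) = (((r * i.toNat + j1.toNat : ℕ) : ℤ) : ZMod t) := by
      rw [ZMod.intCast_eq_intCast_iff]
      refine Int.ModEq.symm (Int.modEq_iff_dvd.mpr ?_)
      push_cast [hiN, hj1N]
      have h : (x : ℤ) - ((r : ℤ) * i + j1) = -((r : ℤ) * i + j1 - x) := by ring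
      rw [h]; exact dvd_neg.mpr hd1
    push_cast at h1 ⊢
    rw [h1]
  have he2 : p 1 = (((r^2 + r + 1) * i.toNat : ℕ) : ZMod t) + ((j2.toNat : ℕ) : ZMod t) := by
    rw [hp1]
    have h1 : ((y : ℤ) : ZMod t) = ((((r^2 + r + 1) * i.toNat + j2.toNat : ℕ) : ℤ) : ZMod t) := by
      rw [ZMod.intCast_eq_intCast_iff]
      refine Int.ModEq.symm (Int.modEq_iff_dvd.mpr ?_)
      push_cast [hiN, hj2N]
      have h : (y : ℤ) - (((r : ℤ)^2 + r + 1) * i + j2) =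
          -(((r : ℤ)^2 + r + 1) * i + j2 - y) := by ring
      rw [h]; exact dvd_neg.mpr hd2
    push_cast at h1 ⊢
    rw [h1]
  intro idx
  fin_cases idx
  · exact ⟨j1.toNat, hj1Ns, by simpa using he1⟩
  · exact ⟨j2.toNat, hj2Ns, by simpa using he2⟩

end
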